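/- Let (Ω, F, P) be a probability space, let h_1, …, h_M : Ω → ℝ be integrable score functions, and let φ ∈ C₀. If there exist positive constants π_1, …, π_M and α ∈ ℝ such that φ(ω) = 1 whenever Σ_{m=1}^M π_m·h_m(ω) < α and φ(ω) = 0 whenever Σ_{m=1}^M π_m·h_m(ω) > α, then φ is admissible. -/

import Mathlib

open MeasureTheory

/-- The average score of `h` on samples accepted by the stochastic criterion `φ`:
`E[h ∣ φ] = E[h·φ]/E[φ]`. -/
noncomputable def condScore {Ω : Type*} [MeasurableSpace Ω] (P : Measure Ω)
    (h φ : Ω → ℝ) : ℝ :=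
  (∫ ω, h ω * φ ω ∂P) / (∫ ω, φ ω ∂P)

/-- `φ ∈ C₀`: a measurable function `Ω → [0,1]` with positive acceptance probability. -/
def IsCriterion {Ω : Type*} [MeasurableSpace Ω] (P : Measure Ω) (φ : Ω → ℝ) : Prop :=
  Measurable φ ∧ (∀ ω, φ ω ∈ Set.Icc (0 : ℝ) 1) ∧ 0 < ∫ ω, φ ω ∂P

/-- `φ' ∈ C₀` dominates `φ` with respect to the scores `h_1, …, h_M`: it has at least the
acceptance probability of `φ`, no larger average score on accepted samples for every `m`,
and a strictly smaller one for at least one `m`. -/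
def Dominates {Ω : Type*} [MeasurableSpace Ω] (P : Measure Ω) {M : ℕ}
    (h : Fin M → Ω → ℝ) (φ' φ : Ω → ℝ) : Prop :=
  IsCriterion P φ' ∧ (∫ ω, φ ω ∂P) ≤ (∫ ω, φ' ω ∂P) ∧
    (∀ m, condScore P (h m) φ' ≤ condScore P (h m) φ) ∧
    (∃ m, condScore P (h m) φ' < condScore P (h m) φ)

/-- sufficiency. If there are positive constants `π_1, …, π_M` and `α ∈ ℝ`
such that `φ = 1` whenever `∑ π_m h_m < α` and `φ = 0` whenever `∑ π_m h_m > α`, then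
`φ ∈ C₀` is admissible (no criterion in `C₀` dominates it). -/
theorem stmt_8 {Ω : Type*} [MeasurableSpace Ω] (P : Measure Ω) [IsProbabilityMeasure P]
    {M : ℕ} (h : Fin M → Ω → ℝ) (hint : ∀ m, Integrable (h m) P)
    (φ : Ω → ℝ) (hφ : IsCriterion P φ)
    (π : Fin M → ℝ) (hπ : ∀ m, 0 < π m) (α : ℝ)
    (h1 : ∀ ω, (∑ m, π m * h m ω) < α → φ ω = 1)
    (h0 : ∀ ω, α < (∑ m, π m * h m ω) → φ ω = 0) :
    ¬ ∃ φ' : Ω → ℝ, Dominates P h φ' φ := by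
  rintro ⟨φ', ⟨hφ'meas, hφ'01, hφ'pos⟩, hle, hall, m₀, hstrict⟩
  obtain ⟨hφmeas, hφ01, hφpos⟩ := hφ
  set g : Ω → ℝ := fun ω => ∑ m, π m * h m ω with hg_def
  have hg_int : Integrable g P := integrable_finset_sum _ fun m _ => (hint m).const_mul _
  set a := ∫ ω, φ ω ∂P with ha_def
  set a' := ∫ ω, φ' ω ∂P with ha'_def
  -- norm bounds
  have hφbd : ∀ ω, ‖φ ω‖ ≤ 1 := fun ω => by
    rw [Real.norm_eq_abs, abs_le]; exact ⟨by linarith [(hφ01 ω).1], (hφ01 ω).2⟩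
  have hφ'bd : ∀ ω, ‖φ' ω‖ ≤ 1 := fun ω => by
    rw [Real.norm_eq_abs, abs_le]; exact ⟨by linarith [(hφ'01 ω).1], (hφ'01 ω).2⟩
  -- integrability of products with bounded ψ
  have hmul_int : ∀ (ψ : Ω → ℝ), Measurable ψ → (∀ ω, ‖ψ ω‖ ≤ 1) →
      ∀ (f : Ω → ℝ), Integrable f P → Integrable (fun ω => f ω * ψ ω) P := by
    intro ψ hm hb f hf
    have := hf.bdd_mul (c := 1) hm.aestronglyMeasurable (Filter.Eventually.of_forall hb)
    simpa [mul_comm] using this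
  have int_gφ : Integrable (fun ω => g ω * φ ω) P := hmul_int φ hφmeas hφbd g hg_int
  have int_gφ' : Integrable (fun ω => g ω * φ' ω) P := hmul_int φ' hφ'meas hφ'bd g hg_int
  have int_φ : Integrable φ P := by
    simpa using hmul_int φ hφmeas hφbd (fun _ => (1 : ℝ)) (integrable_const 1)
  have int_φ' : Integrable φ' P := by
    simpa using hmul_int φ' hφ'meas hφ'bd (fun _ => (1 : ℝ)) (integrable_const 1)
  -- ∫ g ψ = ∑ π m ∫ h m ψ
  have hsum : ∀ (ψ : Ω → ℝ), Measurable ψ → (∀ ω, ‖ψ ω‖ ≤ 1) →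
      (∫ ω, g ω * ψ ω ∂P) = ∑ m, π m * ∫ ω, h m ω * ψ ω ∂P := by
    intro ψ hm hb
    have e : (fun ω => g ω * ψ ω) = fun ω => ∑ m, π m * (h m ω * ψ ω) := by
      funext ω; simp [hg_def, Finset.sum_mul, mul_assoc]
    rw [e, integral_finset_sum]
    · exact Finset.sum_congr rfl fun m _ => by rw [integral_const_mul]
    · exact fun m _ => ((hmul_int ψ hm hb (h m) (hint m)).const_mul _)
  -- weighted sum of the domination inequalities
  have hwsum : ∑ m, π m * condScore P (h m) φ' < ∑ m, π m * condScore P (h m) φ :=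
    Finset.sum_lt_sum (fun m _ => mul_le_mul_of_nonneg_left (hall m) (hπ m).le)
      ⟨m₀, Finset.mem_univ m₀, mul_lt_mul_of_pos_left hstrict (hπ m₀)⟩
  have e1 : ∑ m, π m * condScore P (h m) φ' = (∫ ω, g ω * φ' ω ∂P) / a' := by
    rw [hsum φ' hφ'meas hφ'bd, Finset.sum_div]
    exact Finset.sum_congr rfl fun m _ => by rw [condScore, mul_div_assoc]
  have e2 : ∑ m, π m * condScore P (h m) φ = (∫ ω, g ω * φ ω ∂P) / a := by
    rw [hsum φ hφmeas hφbd, Finset.sum_div]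
    exact Finset.sum_congr rfl fun m _ => by rw [condScore, mul_div_assoc]
  have hscore : (∫ ω, g ω * φ' ω ∂P) / a' < (∫ ω, g ω * φ ω ∂P) / a := by
    rw [← e1, ← e2]; exact hwsum
  -- pointwise inequalities
  have hpt1 : ∀ ω, (g ω - α) * φ ω ≤ (g ω - α) * φ' ω := by
    intro ω
    rcases lt_trichotomy (g ω) α with hlt | heq | hgt
    · have hone := h1 ω hlt
      nlinarith [(hφ'01 ω).2]
    · simp [heq]
    · have hzero := h0 ω hgt
      nlinarith [(hφ'01 ω).1]
  have hpt2 : ∀ ω, (g ω - α) * φ ω ≤ 0 := by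
    intro ω
    rcases lt_trichotomy (g ω) α with hlt | heq | hgt
    · have hone := h1 ω hlt; rw [hone]; nlinarith
    · simp [heq]
    · have hzero := h0 ω hgt; rw [hzero]; simp
  have int_s : Integrable (fun ω => (g ω - α) * φ ω) P :=
    hmul_int φ hφmeas hφbd _ (hg_int.sub (integrable_const α))
  have int_s' : Integrable (fun ω => (g ω - α) * φ' ω) P :=
    hmul_int φ' hφ'meas hφ'bd _ (hg_int.sub (integrable_const α))
  have I1 : (∫ ω, (g ω - α) * φ ω ∂P) ≤ ∫ ω, (g ω - α) * φ' ω ∂P :=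
    integral_mono int_s int_s' hpt1
  have I2 : (∫ ω, (g ω - α) * φ ω ∂P) ≤ 0 := integral_nonpos hpt2
  have exp : ∀ (ψ : Ω → ℝ), Integrable ψ P → Integrable (fun ω => g ω * ψ ω) P →
      (∫ ω, (g ω - α) * ψ ω ∂P) = (∫ ω, g ω * ψ ω ∂P) - α * ∫ ω, ψ ω ∂P := by
    intro ψ hiψ higψ
    have e : (fun ω => (g ω - α) * ψ ω) = fun ω => g ω * ψ ω - α * ψ ω := by
      funext ω; ring
    rw [e, integral_sub higψ (hiψ.const_mul α), integral_const_mul]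
  rw [exp φ int_φ int_gφ] at I1 I2
  rw [exp φ' int_φ' int_gφ'] at I1
  -- numeric contradiction
  set B := ∫ ω, g ω * φ ω ∂P
  set B' := ∫ ω, g ω * φ' ω ∂P
  have hBB : B' * a < B * a' := (div_lt_div_iff₀ hφ'pos hφpos).mp hscore
  nlinarith [mul_le_mul_of_nonneg_right I2 (sub_nonneg.mpr hle), hφpos, hφ'pos]
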